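/- Let u† ∈ L^∞(0,1) be fixed, let c₂ = exp(‖Gu†‖_∞), and let F be the nonlinear operator [F(u)](x) = exp((Gu)(x)). Then for every ρ ∈ (0,1) and every u ∈ L^∞(0,1) with ‖G(u − u†)‖_∞ ≤ ρ one has (1 − ρ) ‖F(u) − F(u†)‖_∞ ≤ c₂ ‖G(u − u†)‖_∞. In particular, the nonlinearity condition ‖F(u) − F(u†)‖ ≤ c_b ‖u − u†‖_{-1} of Assumption 2.1(g) holds with a = 1 and c_b = c₂/(1 − ρ). -/

import Mathlib

open MeasureTheory
open scoped ENNReal NNReal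

lemma key_real (ρ M we de : ℝ) (hρ1 : ρ < 1)
    (hw : |we| ≤ M) (hd : |de| ≤ ρ) :
    (1 - ρ) * |Real.exp we * (Real.exp de - 1)| ≤ Real.exp M * |de| := by
  have hew : Real.exp we ≤ Real.exp M := Real.exp_le_exp.2 (le_trans (le_abs_self we) hw)
  have hρnn : 0 ≤ ρ := le_trans (abs_nonneg de) hd
  have hρ0 : 0 ≤ 1 - ρ := by
    have : -ρ ≤ de := neg_le_of_abs_le hd
    have : -ρ ≤ |de| := le_trans this (le_abs_self de)
    nlinarith [abs_nonneg de]
  have h1 : (1 - ρ) * |Real.exp de - 1| ≤ |de| := by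
    rcases le_or_gt 0 de with h | h
    · have hdρ : de ≤ ρ := le_trans (le_abs_self de) hd
      have hd1 : de < 1 := lt_of_le_of_lt hdρ hρ1
      have he : Real.exp de * (1 - de) ≤ 1 := by
        have h2 := Real.add_one_le_exp (-de)
        have h3 : Real.exp (-de) * Real.exp de = 1 := by
          rw [← Real.exp_add]; simp
        nlinarith [Real.exp_pos de]
      have hge : (1:ℝ) ≤ Real.exp de := Real.one_le_exp h
      rw [abs_of_nonneg (by linarith), abs_of_nonneg h]
      nlinarith [Real.exp_pos de]
    · have he : de + 1 ≤ Real.exp de := Real.add_one_le_exp de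
      have h2 : Real.exp de ≤ 1 := by
        rw [show (1:ℝ) = Real.exp 0 from (Real.exp_zero).symm]
        exact Real.exp_le_exp.2 h.le
      rw [abs_of_nonpos (by linarith), abs_of_neg h]
      have ha : (0:ℝ) ≤ 1 - Real.exp de := by linarith
      calc (1 - ρ) * -(Real.exp de - 1) = (1 - ρ) * (1 - Real.exp de) := by ring
        _ ≤ 1 * (1 - Real.exp de) := mul_le_mul_of_nonneg_right (by linarith) ha
        _ ≤ -de := by linarith
  calc (1 - ρ) * |Real.exp we * (Real.exp de - 1)|
      = Real.exp we * ((1 - ρ) * |Real.exp de - 1|) := by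
        rw [abs_mul, abs_of_pos (Real.exp_pos we)]; ring
    _ ≤ Real.exp M * |de| :=
        mul_le_mul hew h1 (by positivity) (Real.exp_pos M).le

/-- Nonlinearity condition (2.1(g), first part, with `a = 1`) for the exponential forward
operator `[F(u)](x) = exp((Gu)(x))` on `L^∞(0,1)`: with `c₂ = exp(‖Gu†‖_∞)`, for every
`ρ ∈ (0,1)` and every `u` with `‖G(u − u†)‖_∞ ≤ ρ`, one has
`(1 − ρ) ‖F(u) − F(u†)‖_∞ ≤ c₂ ‖G(u − u†)‖_∞`. -/
theorem exponential_forward_operator_nonlinearity_upper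
    (udag : ℝ → ℝ) (hudag : MemLp udag ⊤ (volume.restrict (Set.Ioo 0 1)))
    (ρ : ℝ) (hρ : ρ ∈ Set.Ioo (0:ℝ) 1)
    (u : ℝ → ℝ) (hu : MemLp u ⊤ (volume.restrict (Set.Ioo 0 1)))
    (hclose : eLpNorm (fun x => (∫ t in (0:ℝ)..x, u t) - ∫ t in (0:ℝ)..x, udag t) ⊤
      (volume.restrict (Set.Ioo 0 1)) ≤ ENNReal.ofReal ρ) :
    ENNReal.ofReal (1 - ρ) *
        eLpNorm (fun x => Real.exp (∫ t in (0:ℝ)..x, u t) -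
          Real.exp (∫ t in (0:ℝ)..x, udag t)) ⊤ (volume.restrict (Set.Ioo 0 1)) ≤
      ENNReal.ofReal
          (Real.exp ((eLpNorm (fun x => ∫ t in (0:ℝ)..x, udag t) ⊤
            (volume.restrict (Set.Ioo 0 1))).toReal)) *
        eLpNorm (fun x => (∫ t in (0:ℝ)..x, u t) - ∫ t in (0:ℝ)..x, udag t) ⊤
          (volume.restrict (Set.Ioo 0 1)) := by
  obtain ⟨hρ0, hρ1⟩ := hρ
  set μ := volume.restrict (Set.Ioo (0:ℝ) 1) with hμ
  set w : ℝ → ℝ := fun x => ∫ t in (0:ℝ)..x, udag t with hwdef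
  set v : ℝ → ℝ := fun x => ∫ t in (0:ℝ)..x, u t with hvdef
  set K : ℝ := (eLpNorm udag ⊤ μ).toReal with hKdef
  -- a.e. bound on udag
  have hKfin : eLpNorm udag ⊤ μ < ⊤ := hudag.2
  have hKae : ∀ᵐ t ∂μ, ‖udag t‖ ≤ K := by
    filter_upwards [ae_le_eLpNormEssSup (f := udag) (μ := μ)] with t ht
    have : ((‖udag t‖₊ : ℝ≥0∞)).toReal ≤ (eLpNorm udag ⊤ μ).toReal := by
      apply ENNReal.toReal_mono hKfin.ne
      rw [eLpNorm_exponent_top]; exact ht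
    simpa [hKdef] using this
  -- pointwise bound on w
  have hWbound : ∀ x ∈ Set.Ioo (0:ℝ) 1, ‖w x‖ ≤ K := by
    intro x hx
    set ν := volume.restrict (Set.Ioc (0:ℝ) x) with hν
    have hsub : Set.Ioc (0:ℝ) x ⊆ Set.Ioo (0:ℝ) 1 := fun t ht =>
      ⟨ht.1, lt_of_le_of_lt ht.2 hx.2⟩
    have hνle : ν ≤ μ := Measure.restrict_mono hsub le_rfl
    haveI : IsFiniteMeasure ν := by
      constructor
      rw [hν, Measure.restrict_apply_univ, Real.volume_Ioc]
      exact ENNReal.ofReal_lt_top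
    have hKν : ∀ᵐ t ∂ν, ‖udag t‖ ≤ K := hKae.filter_mono ((Measure.absolutelyContinuous_of_le hνle).ae_le)
    have hsm : AEStronglyMeasurable udag ν := hudag.1.mono_measure hνle
    have hint : Integrable udag ν :=
      Integrable.mono' (integrable_const K) hsm hKν
    have heq : w x = ∫ t, udag t ∂ν := by
      rw [hwdef]; simp only
      rw [intervalIntegral.integral_of_le hx.1.le]
    rw [heq]
    calc ‖∫ t, udag t ∂ν‖ ≤ ∫ t, ‖udag t‖ ∂ν := norm_integral_le_integral_norm udag
      _ ≤ ∫ _, K ∂ν := integral_mono_ae hint.norm (integrable_const K) hKν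
      _ = (ν Set.univ).toReal * K := by rw [integral_const]; simp [smul_eq_mul, Measure.real]
      _ ≤ 1 * K := by
          apply mul_le_mul_of_nonneg_right _ (by rw [hKdef]; exact ENNReal.toReal_nonneg)
          have hνuniv : ν Set.univ = ENNReal.ofReal x := by
            rw [hν, Measure.restrict_apply_univ, Real.volume_Ioc]; simp
          rw [hνuniv, ENNReal.toReal_ofReal hx.1.le]
          exact hx.2.le
      _ = K := one_mul K
  -- eLpNorm of w is finite
  have hWle : eLpNorm w ⊤ μ ≤ ENNReal.ofReal K := by
    rw [eLpNorm_exponent_top]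
    apply eLpNormEssSup_le_of_ae_bound
    rw [hμ]
    exact (ae_restrict_iff' measurableSet_Ioo).2 (ae_of_all _ hWbound)
  have hWfin : eLpNorm w ⊤ μ < ⊤ := lt_of_le_of_lt hWle ENNReal.ofReal_lt_top
  set M : ℝ := (eLpNorm w ⊤ μ).toReal with hMdef
  have hMae : ∀ᵐ x ∂μ, |w x| ≤ M := by
    filter_upwards [ae_le_eLpNormEssSup (f := w) (μ := μ)] with x hx
    have : ((‖w x‖₊ : ℝ≥0∞)).toReal ≤ (eLpNorm w ⊤ μ).toReal := by
      apply ENNReal.toReal_mono hWfin.ne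
      rw [eLpNorm_exponent_top]; exact hx
    simpa [Real.norm_eq_abs, hMdef] using this
  -- a.e. bound on the difference d = v - w
  have hdae : ∀ᵐ x ∂μ, |v x - w x| ≤ ρ := by
    filter_upwards [ae_le_eLpNormEssSup (f := fun x => v x - w x) (μ := μ)] with x hx
    have h2 : (ENNReal.ofReal |v x - w x|) ≤ ENNReal.ofReal ρ := by
      calc ENNReal.ofReal |v x - w x| = (‖v x - w x‖₊ : ℝ≥0∞) := by
            rw [← enorm_eq_nnnorm, Real.enorm_eq_ofReal_abs]
        _ ≤ eLpNormEssSup (fun x => v x - w x) μ := hx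
        _ = eLpNorm (fun x => v x - w x) ⊤ μ := eLpNorm_exponent_top.symm
        _ ≤ ENNReal.ofReal ρ := hclose
    exact (ENNReal.ofReal_le_ofReal_iff hρ0.le).1 h2
  -- reduce the goal to a pointwise inequality
  have h1 : ENNReal.ofReal (1 - ρ) = ((‖(1 - ρ : ℝ)‖₊ : ℝ≥0) : ℝ≥0∞) := by
    rw [← enorm_eq_nnnorm, Real.enorm_eq_ofReal (by linarith)]
  have h2 : ENNReal.ofReal (Real.exp M) = ((‖Real.exp M‖₊ : ℝ≥0) : ℝ≥0∞) := by
    rw [← enorm_eq_nnnorm, Real.enorm_eq_ofReal (Real.exp_pos M).le]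
  rw [h1, h2, ← enorm_eq_nnnorm, ← enorm_eq_nnnorm, ← eLpNorm_const_smul ((1 - ρ : ℝ)) _ _ _, ← eLpNorm_const_smul (Real.exp M) _ _ _]
  apply eLpNorm_mono_ae
  filter_upwards [hMae, hdae] with x hMx hdx
  simp only [Pi.smul_apply, smul_eq_mul, Real.norm_eq_abs]
  have hvw : Real.exp (v x) - Real.exp (w x) = Real.exp (w x) * (Real.exp (v x - w x) - 1) := by
    rw [mul_sub, mul_one, ← Real.exp_add]; ring_nf
  calc |(1 - ρ) * (Real.exp (v x) - Real.exp (w x))|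
      = (1 - ρ) * |Real.exp (w x) * (Real.exp (v x - w x) - 1)| := by
        rw [abs_mul, abs_of_nonneg (by linarith : (0:ℝ) ≤ 1 - ρ), hvw]
    _ ≤ Real.exp M * |v x - w x| := key_real ρ M (w x) (v x - w x) hρ1 hMx hdx
    _ = |Real.exp M * (v x - w x)| := by
        rw [abs_mul, abs_of_pos (Real.exp_pos M)]
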